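/- Let p ∈ (1,2], β ∈ [0,1), σ ≥ 0, and let ζ_1, …, ζ_k be ℝ^d-valued random vectors adapted to a filtration (𝓕_t)_{t≥0} with 𝔼[ζ_t | 𝓕_{t−1}] = 0 and 𝔼‖ζ_t‖^p ≤ σ^p for every t = 1, …, k. Then 𝔼[‖Σ_{t=1}^k (1−β) β^{k−t} ζ_t‖^p] ≤ 2(1−β)^p σ^p / (1 − β^p). -/

import Mathlib

open MeasureTheory
open scoped NNReal ENNReal

section Pointwise

variable {F : Type*} [NormedAddCommGroup F] [InnerProductSpace ℝ F]

private lemma nn_concave {p : ℝ} (hp1 : 1 ≤ p) (hp2 : p ≤ 2) (A B : ℝ≥0) :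
    A ^ (p / 2) + B ^ (p / 2) ≤ 2 * ((A + B) / 2) ^ (p / 2) := by
  have hs0 : (0 : ℝ) < p / 2 := by linarith
  have hq : 1 ≤ 2 / p := by
    rw [le_div_iff₀ (by linarith : (0:ℝ) < p)]
    linarith
  have hw : (1/2 : ℝ≥0) + 1/2 = 1 := by
    rw [← add_div]
    norm_num
  have h := NNReal.rpow_arith_mean_le_arith_mean2_rpow (1/2) (1/2) (A ^ (p/2)) (B ^ (p/2))
    hw hq
  have hexp : (p / 2) * (2 / p) = 1 := by field_simp
  rw [← NNReal.rpow_mul, ← NNReal.rpow_mul, hexp, NNReal.rpow_one, NNReal.rpow_one] at h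
  have h2 := NNReal.rpow_le_rpow h (le_of_lt hs0)
  rw [← NNReal.rpow_mul] at h2
  have hexp2 : (2 / p) * (p / 2) = 1 := by field_simp
  rw [hexp2, NNReal.rpow_one] at h2
  have hhalf : (1/2 : ℝ≥0) * A + 1/2 * B = (A + B) / 2 := by
    rw [add_div, one_div, inv_mul_eq_div, inv_mul_eq_div]
  rw [hhalf] at h2
  have hcanc : (2:ℝ≥0) * (1/2) = 1 := by
    rw [mul_one_div]
    exact div_self two_ne_zero
  calc A ^ (p/2) + B ^ (p/2)
      = 2 * (1/2) * A ^ (p/2) + 2 * (1/2) * B ^ (p/2) := by rw [hcanc, one_mul, one_mul]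
    _ = 2 * (1/2 * A ^ (p/2) + 1/2 * B ^ (p/2)) := by rw [mul_add, mul_assoc, mul_assoc]
    _ ≤ 2 * ((A + B) / 2) ^ (p/2) := mul_le_mul_right h2 2

private lemma real_concave {p : ℝ} (hp1 : 1 ≤ p) (hp2 : p ≤ 2) {A B : ℝ}
    (hA : 0 ≤ A) (hB : 0 ≤ B) :
    A ^ (p / 2) + B ^ (p / 2) ≤ 2 * ((A + B) / 2) ^ (p / 2) := by
  lift A to ℝ≥0 using hA
  lift B to ℝ≥0 using hB
  have h := nn_concave hp1 hp2 A B
  have h2 : ((A : ℝ) + B) / 2 = (((A + B) / 2 : ℝ≥0) : ℝ) := by push_cast; ring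
  rw [h2, ← NNReal.coe_rpow, ← NNReal.coe_rpow, ← NNReal.coe_rpow]
  exact_mod_cast h

private lemma real_subadd {s : ℝ} (hs0 : 0 ≤ s) (hs1 : s ≤ 1) {A B : ℝ}
    (hA : 0 ≤ A) (hB : 0 ≤ B) : (A + B) ^ s ≤ A ^ s + B ^ s := by
  lift A to ℝ≥0 using hA
  lift B to ℝ≥0 using hB
  have h := NNReal.rpow_add_le_add_rpow A B hs0 hs1
  have h2 : (A : ℝ) + B = ((A + B : ℝ≥0) : ℝ) := by push_cast; ring
  rw [h2, ← NNReal.coe_rpow, ← NNReal.coe_rpow, ← NNReal.coe_rpow]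
  exact_mod_cast h

private lemma sq_rpow {p : ℝ} (a : ℝ) (ha : 0 ≤ a) : (a * a) ^ (p / 2) = a ^ p := by
  have h2 : a * a = a ^ (2 : ℝ) := by
    rw [show (2:ℝ) = ((2:ℕ):ℝ) by norm_num, Real.rpow_natCast, sq]
  rw [h2, ← Real.rpow_mul ha]
  congr 1
  ring

/-- Clarkson-type pointwise inequality in an inner product space for `1 ≤ p ≤ 2`. -/
private lemma ptwise {p : ℝ} (hp1 : 1 ≤ p) (hp2 : p ≤ 2) (x y : F) :
    ‖x + y‖ ^ p + ‖x - y‖ ^ p ≤ 2 * ‖x‖ ^ p + 2 * ‖y‖ ^ p := by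
  have par := parallelogram_law_with_norm ℝ x y
  calc ‖x + y‖ ^ p + ‖x - y‖ ^ p
      = (‖x + y‖ * ‖x + y‖) ^ (p/2) + (‖x - y‖ * ‖x - y‖) ^ (p/2) := by
        rw [sq_rpow _ (norm_nonneg _), sq_rpow _ (norm_nonneg _)]
    _ ≤ 2 * ((‖x + y‖ * ‖x + y‖ + ‖x - y‖ * ‖x - y‖) / 2) ^ (p/2) :=
        real_concave hp1 hp2 (mul_self_nonneg _) (mul_self_nonneg _)
    _ = 2 * (‖x‖ * ‖x‖ + ‖y‖ * ‖y‖) ^ (p/2) := by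
        simp only [← sq]
        rw [par]
        congr 2
        ring
    _ ≤ 2 * ((‖x‖ * ‖x‖) ^ (p/2) + (‖y‖ * ‖y‖) ^ (p/2)) := by
        have := real_subadd (by linarith : (0:ℝ) ≤ p/2) (by linarith : p/2 ≤ 1)
          (mul_self_nonneg ‖x‖) (mul_self_nonneg ‖y‖)
        linarith
    _ = 2 * ‖x‖ ^ p + 2 * ‖y‖ ^ p := by
        rw [sq_rpow _ (norm_nonneg _), sq_rpow _ (norm_nonneg _)]
        ring

private lemma tangent {p u t : ℝ} (hp : 1 ≤ p) (hu : 0 < u) (ht : 0 ≤ t) :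
    u ^ p + p * u ^ (p - 1) * (t - u) ≤ t ^ p := by
  have hs : (-1 : ℝ) ≤ t / u - 1 := by
    have : 0 ≤ t / u := div_nonneg ht hu.le
    linarith
  have h := one_add_mul_self_le_rpow_one_add hs hp
  have h1 : (1 : ℝ) + (t / u - 1) = t / u := by ring
  rw [h1, Real.div_rpow ht hu.le] at h
  have hup : 0 < u ^ p := Real.rpow_pos_of_pos hu p
  have h2 := mul_le_mul_of_nonneg_left h hup.le
  have hur : u ^ p * (t ^ p / u ^ p) = t ^ p := by field_simp
  rw [hur] at h2
  have e1 : u ^ (p - 1) = u ^ p / u := by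
    rw [Real.rpow_sub hu, Real.rpow_one]
  have expand : u ^ p * (1 + p * (t / u - 1)) = u ^ p + p * (u ^ p / u) * (t - u) := by
    field_simp
  rw [expand] at h2
  rw [e1]
  exact h2

/-- First-order convexity lower bound for `‖·‖^p`. -/
private lemma grad_lower {p : ℝ} (hp : 1 < p) (x z : F) :
    ‖x‖ ^ p - (inner ℝ ((p * ‖x‖ ^ (p - 2)) • x) z : ℝ) ≤ ‖x - z‖ ^ p := by
  rcases eq_or_ne x 0 with rfl | hx
  · have h0 : (0:ℝ) ^ p = 0 := Real.zero_rpow (by positivity)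
    simp only [norm_zero, smul_zero, inner_zero_left, sub_zero, zero_sub, norm_neg, h0]
    positivity
  · have hu : 0 < ‖x‖ := norm_pos_iff.mpr hx
    set u := ‖x‖ with hu_def
    set T := ‖x - z‖ with hT_def
    have hT0 : 0 ≤ T := norm_nonneg _
    have hinner : (inner ℝ ((p * u ^ (p - 2)) • x) z : ℝ) = p * u ^ (p - 2) * inner ℝ x z :=
      real_inner_smul_left x z _
    have hxz : u * u - (inner ℝ x z : ℝ) ≤ u * T := by
      have h1 : (inner ℝ x (x - z) : ℝ) ≤ u * T := real_inner_le_norm x (x - z)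
      have h2 : (inner ℝ x (x - z) : ℝ) = u * u - inner ℝ x z := by
        rw [inner_sub_right, real_inner_self_eq_norm_mul_norm]
      linarith
    have htan := tangent hp.le hu hT0
    have hup2 : (0:ℝ) ≤ u ^ (p - 2) := Real.rpow_nonneg hu.le _
    have hmul := mul_le_mul_of_nonneg_left hxz hup2
    have e1 : u ^ (p - 2) * (u * u) = u ^ p := by
      rw [show u ^ p = u ^ ((p - 2) + 1 + 1) by congr 1; ring, Real.rpow_add hu,
        Real.rpow_add hu, Real.rpow_one]
      ring
    have e2 : u ^ (p - 2) * u = u ^ (p - 1) := by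
      rw [show p - 1 = (p - 2) + 1 by ring, Real.rpow_add hu, Real.rpow_one]
    have key : u ^ p - u ^ (p - 2) * (inner ℝ x z : ℝ) ≤ u ^ (p - 1) * T := by
      have : u ^ (p - 2) * (u * u) - u ^ (p - 2) * (inner ℝ x z : ℝ) ≤ u ^ (p - 2) * (u * T) := by
        nlinarith [hmul]
      calc u ^ p - u ^ (p - 2) * (inner ℝ x z : ℝ)
          = u ^ (p - 2) * (u * u) - u ^ (p - 2) * (inner ℝ x z : ℝ) := by rw [e1]
        _ ≤ u ^ (p - 2) * (u * T) := this
        _ = u ^ (p - 1) * T := by rw [← e2]; ring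
    have hp0 : (0:ℝ) ≤ p := by linarith
    have keyp := mul_le_mul_of_nonneg_left key hp0
    have e3 : u ^ (p - 1) * u = u ^ p := by
      rw [show u ^ p = u ^ ((p - 1) + 1) by congr 1; ring, Real.rpow_add hu, Real.rpow_one]
    rw [hinner]
    have e3p : p * (u ^ (p - 1) * u) = p * u ^ p := by rw [e3]
    linarith [htan, keyp, e3p]

end Pointwise
open scoped NNReal ENNReal

section Cross

variable {Ω : Type*} {m mΩ : MeasurableSpace Ω} {μ : Measure Ω} [IsProbabilityMeasure μ]
  {d : ℕ}

/-- If `W` is `m`-measurable and in `L^Q`, `Z ∈ L^P` with `1/Q + 1/P = 1`, and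
`𝔼[Z|m] = 0`, then `⟪W, Z⟫` is integrable with zero integral. -/
private lemma cross_zero (hm : m ≤ mΩ) {P Q : ℝ≥0∞} (hP1 : 1 ≤ P)
    (hQP : 1 / Q + 1 / P = 1 / (1 : ℝ≥0∞))
    {W Z : Ω → EuclideanSpace ℝ (Fin d)}
    (hWm : StronglyMeasurable[m] W) (hWq : MemLp W Q μ)
    (hZp : MemLp Z P μ) (hZc : μ[Z | m] =ᵐ[μ] 0) :
    Integrable (fun ω => (inner ℝ (W ω) (Z ω) : ℝ)) μ ∧
      ∫ ω, (inner ℝ (W ω) (Z ω) : ℝ) ∂μ = 0 := by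
  haveI : IsFiniteMeasure (μ.trim hm) := isFiniteMeasure_trim hm
  haveI : SigmaFinite (μ.trim hm) := inferInstance
  -- Hölder: ‖W‖ * ‖Z‖ is integrable
  have hprod : Integrable (fun ω => ‖W ω‖ * ‖Z ω‖) μ := by
    haveI : ENNReal.HolderTriple Q P 1 := ⟨by simpa only [one_div] using hQP⟩
    have h : MemLp ((fun ω => ‖W ω‖) • fun ω => ‖Z ω‖) 1 μ :=
      hZp.norm.smul hWq.norm
    have := memLp_one_iff_integrable.mp h
    simpa [Pi.smul_apply, smul_eq_mul, Pi.mul_def] using this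
  have hWam : AEStronglyMeasurable W μ := (hWm.mono hm).aestronglyMeasurable
  -- integrability of the inner product
  have hinner_int : Integrable (fun ω => (inner ℝ (W ω) (Z ω) : ℝ)) μ := by
    refine hprod.mono' (hWam.inner hZp.1) ?_
    filter_upwards with ω
    rw [Real.norm_eq_abs]
    exact abs_real_inner_le_norm _ _
  -- component bound
  have habs : ∀ (x : EuclideanSpace ℝ (Fin d)) (i : Fin d), |x i| ≤ ‖x‖ := by
    intro x i
    have h1 : x i = (inner ℝ (EuclideanSpace.single i (1:ℝ)) x : ℝ) := by
      rw [EuclideanSpace.inner_single_left]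
      simp
    rw [h1]
    calc |(inner ℝ (EuclideanSpace.single i (1:ℝ)) x : ℝ)|
        ≤ ‖EuclideanSpace.single i (1:ℝ)‖ * ‖x‖ := abs_real_inner_le_norm _ _
      _ = ‖x‖ := by rw [EuclideanSpace.norm_single]; simp
  have hZ1 : Integrable Z μ := hZp.integrable hP1
  -- the set integrals of Z over m-measurable sets vanish
  have hsetZ : ∀ s : Set Ω, MeasurableSet[m] s → ∫ ω in s, Z ω ∂μ = 0 := by
    intro s hs
    rw [← setIntegral_condExp hm hZ1 hs]
    rw [setIntegral_congr_ae (hm s hs) (hZc.mono fun ω hω _ => hω)]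
    simp
  -- per-coordinate integral vanishing
  have key : ∀ i : Fin d, Integrable (fun ω => W ω i * Z ω i) μ ∧
      ∫ ω, W ω i * Z ω i ∂μ = 0 := by
    intro i
    have hWi_m : StronglyMeasurable[m] (fun ω => W ω i) := by
      have := (EuclideanSpace.proj (𝕜 := ℝ) i).continuous.comp_stronglyMeasurable hWm
      simpa using this
    have hZi_am : AEStronglyMeasurable (fun ω => Z ω i) μ := by
      have := (EuclideanSpace.proj (𝕜 := ℝ) i).continuous.comp_aestronglyMeasurable hZp.1
      simpa using this
    have hWiZi : Integrable (fun ω => W ω i * Z ω i) μ := by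
      refine hprod.mono' (((hWi_m.mono hm).aestronglyMeasurable).mul hZi_am) ?_
      filter_upwards with ω
      rw [Real.norm_eq_abs, abs_mul]
      exact mul_le_mul (habs _ _) (habs _ _) (abs_nonneg _) (norm_nonneg _)
    have hZi : Integrable (fun ω => Z ω i) μ := by
      have := (EuclideanSpace.proj (𝕜 := ℝ) i).integrable_comp hZ1
      simpa using this
    have hZi0 : μ[(fun ω => Z ω i) | m] =ᵐ[μ] 0 := by
      refine (ae_eq_condExp_of_forall_setIntegral_eq hm hZi
        (fun s _ _ => (integrable_zero _ _ _).integrableOn)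
        (fun s hs hμs => ?_) aestronglyMeasurable_const).symm
      simp only [Pi.zero_apply, integral_zero]
      have hL := (EuclideanSpace.proj (𝕜 := ℝ) i).integral_comp_comm
        (μ := μ.restrict s) (hZ1.restrict (s := s))
      rw [hsetZ s hs] at hL
      simp only [map_zero] at hL
      rw [← hL]
      simp
    refine ⟨hWiZi, ?_⟩
    have hpull : μ[(fun ω => W ω i) * (fun ω => Z ω i) | m]
        =ᵐ[μ] (fun ω => W ω i) * μ[(fun ω => Z ω i) | m] :=
      condExp_mul_of_stronglyMeasurable_left hWi_m hWiZi hZi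
    have h0 : ((fun ω => W ω i) * μ[(fun ω => Z ω i) | m]) =ᵐ[μ] 0 := by
      filter_upwards [hZi0] with ω hω
      simp [Pi.mul_apply, hω]
    calc ∫ ω, W ω i * Z ω i ∂μ
        = ∫ ω, (μ[(fun ω => W ω i) * (fun ω => Z ω i) | m]) ω ∂μ :=
          (integral_condExp hm).symm
      _ = ∫ ω, ((fun ω => W ω i) * μ[(fun ω => Z ω i) | m]) ω ∂μ :=
          integral_congr_ae hpull
      _ = ∫ ω, (0 : Ω → ℝ) ω ∂μ := integral_congr_ae h0
      _ = 0 := by simp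
  refine ⟨hinner_int, ?_⟩
  have hrep : (fun ω => (inner ℝ (W ω) (Z ω) : ℝ)) = fun ω => ∑ i, W ω i * Z ω i := by
    funext ω
    rw [PiLp.inner_apply]
    simp [RCLike.inner_apply]
    exact Finset.sum_congr rfl fun i _ => mul_comm _ _
  rw [hrep, integral_finset_sum Finset.univ (fun i _ => (key i).1)]
  exact Finset.sum_eq_zero fun i _ => (key i).2

end Cross

section Step

variable {Ω : Type*} {m mΩ : MeasurableSpace Ω} {μ : Measure Ω} [IsProbabilityMeasure μ]
  {d : ℕ}

private lemma meas_norm_rpow {E : Type*} [NormedAddCommGroup E]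
    {S : Ω → E} (hS : StronglyMeasurable[m] S) (c : ℝ) :
    Measurable[m] fun ω => ‖S ω‖ ^ c := by
  have hrw : (fun ω => ‖S ω‖ ^ c) = fun ω =>
      if ‖S ω‖ = 0 then (if c = 0 then 1 else 0) else Real.exp (Real.log ‖S ω‖ * c) := by
    funext ω
    rcases eq_or_ne ‖S ω‖ 0 with h | h
    · rw [if_pos h, h]
      rcases eq_or_ne c 0 with h2 | h2
      · rw [if_pos h2, h2, Real.rpow_zero]
      · rw [if_neg h2, Real.zero_rpow h2]
    · rw [if_neg h, Real.rpow_def_of_pos (lt_of_le_of_ne (norm_nonneg _) (Ne.symm h))]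
  rw [hrw]
  have hnorm : Measurable[m] fun ω => ‖S ω‖ := hS.norm.measurable
  have hset : MeasurableSet[m] {ω | ‖S ω‖ = 0} := hnorm (measurableSet_singleton 0)
  exact Measurable.ite hset measurable_const
    (Real.measurable_exp.comp ((Real.measurable_log.comp hnorm).mul_const c))

private lemma step (hm : m ≤ mΩ) {p : ℝ} (hp1 : 1 < p) (hp2 : p ≤ 2)
    {S Z : Ω → EuclideanSpace ℝ (Fin d)}
    (hSm : StronglyMeasurable[m] S) (hSp : MemLp S (ENNReal.ofReal p) μ)
    (hZp : MemLp Z (ENNReal.ofReal p) μ) (hZc : μ[Z | m] =ᵐ[μ] 0) :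
    ∫ ω, ‖S ω + Z ω‖ ^ p ∂μ ≤ ∫ ω, ‖S ω‖ ^ p ∂μ + 2 * ∫ ω, ‖Z ω‖ ^ p ∂μ := by
  have hp0 : (0 : ℝ) < p := lt_trans one_pos hp1
  have hpm1 : (0 : ℝ) < p - 1 := by linarith
  have hP0 : ENNReal.ofReal p ≠ 0 := (ENNReal.ofReal_pos.mpr hp0).ne'
  have hPtop : ENNReal.ofReal p ≠ ∞ := ENNReal.ofReal_ne_top
  have hP1 : 1 ≤ ENNReal.ofReal p := by
    rw [← ENNReal.ofReal_one]
    exact ENNReal.ofReal_le_ofReal hp1.le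
  have hPr : (ENNReal.ofReal p).toReal = p := ENNReal.toReal_ofReal hp0.le
  -- conjugate exponent
  have hQP : 1 / ENNReal.ofReal (p / (p - 1)) + 1 / ENNReal.ofReal p = 1 / (1 : ℝ≥0∞) := by
    have e1 : (1 : ℝ≥0∞) / ENNReal.ofReal p = ENNReal.ofReal (1 / p) := by
      rw [one_div, one_div, ← ENNReal.ofReal_inv_of_pos hp0]
    have e2 : (1 : ℝ≥0∞) / ENNReal.ofReal (p / (p - 1)) = ENNReal.ofReal ((p - 1) / p) := by
      rw [one_div, ← ENNReal.ofReal_inv_of_pos (by positivity), inv_div]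
    rw [e1, e2, ← ENNReal.ofReal_add (by positivity) (by positivity)]
    rw [show (p - 1) / p + 1 / p = 1 by rw [← add_div, sub_add_cancel, div_self hp0.ne'], ENNReal.ofReal_one]
    simp
  -- the gradient field W
  set W : Ω → EuclideanSpace ℝ (Fin d) := fun ω => (p * ‖S ω‖ ^ (p - 2)) • S ω with hW_def
  have hWm : StronglyMeasurable[m] W := by
    have h1 : StronglyMeasurable[m] fun ω => p * ‖S ω‖ ^ (p - 2) :=
      (measurable_const.mul (meas_norm_rpow hSm (p - 2))).stronglyMeasurable
    exact h1.smul hSm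
  have hWnorm : ∀ ω, ‖W ω‖ ≤ p * ‖S ω‖ ^ (p - 1) := by
    intro ω
    rw [hW_def, norm_smul, Real.norm_eq_abs,
      abs_of_nonneg (by positivity : (0:ℝ) ≤ p * ‖S ω‖ ^ (p - 2))]
    rcases eq_or_ne (S ω) 0 with h | h
    · simp only [h, norm_zero, mul_zero]
      positivity
    · have h0 : 0 < ‖S ω‖ := norm_pos_iff.mpr h
      have : ‖S ω‖ ^ (p - 2) * ‖S ω‖ = ‖S ω‖ ^ (p - 1) := by
        rw [show p - 1 = (p - 2) + 1 by ring, Real.rpow_add h0, Real.rpow_one]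
      rw [mul_assoc, this]
  have hWq : MemLp W (ENNReal.ofReal (p / (p - 1))) μ := by
    have hg0 := hSp.norm_rpow_div (ENNReal.ofReal (p - 1))
    rw [ENNReal.toReal_ofReal hpm1.le, ← ENNReal.ofReal_div_of_pos hpm1] at hg0
    have hg : MemLp (fun ω => p * ‖S ω‖ ^ (p - 1)) (ENNReal.ofReal (p / (p - 1))) μ :=
      hg0.const_mul p
    refine MemLp.of_le hg ((hWm.mono hm).aestronglyMeasurable) ?_
    filter_upwards with ω
    rw [Real.norm_eq_abs (p * _), abs_of_nonneg (by positivity : (0:ℝ) ≤ p * ‖S ω‖ ^ (p - 1))]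
    exact hWnorm ω
  obtain ⟨icross, cross0⟩ := cross_zero hm hP1 hQP hWm hWq hZp hZc
  -- integrabilities
  have iS : Integrable (fun ω => ‖S ω‖ ^ p) μ := by
    have := hSp.integrable_norm_rpow hP0 hPtop
    rwa [hPr] at this
  have iZ : Integrable (fun ω => ‖Z ω‖ ^ p) μ := by
    have := hZp.integrable_norm_rpow hP0 hPtop
    rwa [hPr] at this
  have iSZm : Integrable (fun ω => ‖S ω - Z ω‖ ^ p) μ := by
    have := (hSp.sub hZp).integrable_norm_rpow hP0 hPtop
    rwa [hPr] at this
  have iSZp : Integrable (fun ω => ‖S ω + Z ω‖ ^ p) μ := by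
    have := (hSp.add hZp).integrable_norm_rpow hP0 hPtop
    rwa [hPr] at this
  -- the convexity lower bound
  have hlow : ∫ ω, ‖S ω‖ ^ p ∂μ ≤ ∫ ω, ‖S ω - Z ω‖ ^ p ∂μ := by
    have hint : ∫ ω, (‖S ω‖ ^ p - (inner ℝ (W ω) (Z ω) : ℝ)) ∂μ
        ≤ ∫ ω, ‖S ω - Z ω‖ ^ p ∂μ :=
      integral_mono (iS.sub icross) iSZm (fun ω => grad_lower hp1 (S ω) (Z ω))
    rwa [integral_sub iS icross, cross0, sub_zero] at hint
  -- Clarkson-type inequality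
  have hpar : ∫ ω, ‖S ω + Z ω‖ ^ p ∂μ + ∫ ω, ‖S ω - Z ω‖ ^ p ∂μ
      ≤ 2 * ∫ ω, ‖S ω‖ ^ p ∂μ + 2 * ∫ ω, ‖Z ω‖ ^ p ∂μ := by
    have h1 : ∫ ω, (‖S ω + Z ω‖ ^ p + ‖S ω - Z ω‖ ^ p) ∂μ
        ≤ ∫ ω, (2 * ‖S ω‖ ^ p + 2 * ‖Z ω‖ ^ p) ∂μ :=
      integral_mono (iSZp.add iSZm) ((iS.const_mul 2).add (iZ.const_mul 2))
        (fun ω => ptwise hp1.le hp2 (S ω) (Z ω))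
    rwa [integral_add iSZp iSZm, integral_add (iS.const_mul 2) (iZ.const_mul 2),
      integral_const_mul, integral_const_mul] at h1
  linarith

end Step

section Main

variable {Ω : Type*} {mΩ : MeasurableSpace Ω} {μ : Measure Ω} [IsProbabilityMeasure μ]
  {d : ℕ}

private lemma sum_bound (𝓕 : Filtration ℕ mΩ) {p : ℝ} (hp1 : 1 < p) (hp2 : p ≤ 2)
    (ζ : ℕ → Ω → EuclideanSpace ℝ (Fin d)) (c : ℕ → ℝ)
    (hadapt : ∀ t, StronglyMeasurable[𝓕 t] (ζ t)) :
    ∀ n : ℕ, (∀ t ∈ Finset.Icc 1 n, μ[ζ t | 𝓕 (t - 1)] =ᵐ[μ] 0) →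
      (∀ t ∈ Finset.Icc 1 n, MemLp (ζ t) (ENNReal.ofReal p) μ) →
      MemLp (fun ω => ∑ t ∈ Finset.Icc 1 n, c t • ζ t ω) (ENNReal.ofReal p) μ ∧
      ∫ ω, ‖∑ t ∈ Finset.Icc 1 n, c t • ζ t ω‖ ^ p ∂μ ≤
        ∑ t ∈ Finset.Icc 1 n, 2 * |c t| ^ p * ∫ ω, ‖ζ t ω‖ ^ p ∂μ := by
  have hp0 : (0 : ℝ) < p := lt_trans one_pos hp1
  intro n
  induction n with
  | zero =>
    intro _ _
    simp only [show Finset.Icc 1 0 = (∅ : Finset ℕ) from rfl, Finset.sum_empty]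
    constructor
    · exact memLp_const 0
    · simp [Real.zero_rpow hp0.ne']
  | succ n ih =>
    intro hcond hζp
    have hsub : ∀ t ∈ Finset.Icc 1 n, t ∈ Finset.Icc 1 (n + 1) := by
      intro t ht
      simp only [Finset.mem_Icc] at *
      omega
    obtain ⟨ihL, ihI⟩ := ih (fun t ht => hcond t (hsub t ht)) (fun t ht => hζp t (hsub t ht))
    have hmem : n + 1 ∈ Finset.Icc 1 (n + 1) := by simp
    have hsplit : ∀ ω, ∑ t ∈ Finset.Icc 1 (n + 1), c t • ζ t ω
        = (∑ t ∈ Finset.Icc 1 n, c t • ζ t ω) + c (n + 1) • ζ (n + 1) ω := fun ω =>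
      Finset.sum_Icc_succ_top (by omega) _
    have hSm : StronglyMeasurable[𝓕 n] fun ω => ∑ t ∈ Finset.Icc 1 n, c t • ζ t ω := by
      apply Finset.stronglyMeasurable_fun_sum
      intro t ht
      have htn : t ≤ n := (Finset.mem_Icc.mp ht).2
      exact ((hadapt t).mono (𝓕.mono htn)).const_smul (c t)
    have hZp : MemLp (fun ω => c (n + 1) • ζ (n + 1) ω) (ENNReal.ofReal p) μ :=
      (hζp (n + 1) hmem).const_smul (c (n + 1))
    have hZc : μ[(fun ω => c (n + 1) • ζ (n + 1) ω) | 𝓕 n] =ᵐ[μ] 0 := by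
      have h1 : μ[c (n + 1) • ζ (n + 1) | 𝓕 n] =ᵐ[μ] c (n + 1) • μ[ζ (n + 1) | 𝓕 n] :=
        condExp_smul (c (n + 1)) (ζ (n + 1)) (𝓕 n)
      have h2 := hcond (n + 1) hmem
      rw [show n + 1 - 1 = n from rfl] at h2
      refine h1.trans ?_
      filter_upwards [h2] with ω hω
      simp [hω]
    have hstep := step (𝓕.le n) hp1 hp2 hSm ihL hZp hZc
    have hnormZ : ∫ ω, ‖c (n + 1) • ζ (n + 1) ω‖ ^ p ∂μ
        = |c (n + 1)| ^ p * ∫ ω, ‖ζ (n + 1) ω‖ ^ p ∂μ := by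
      rw [← integral_const_mul]
      congr 1
      funext ω
      rw [norm_smul, Real.norm_eq_abs, Real.mul_rpow (abs_nonneg _) (norm_nonneg _)]
    simp only [hsplit]
    constructor
    · exact ihL.add hZp
    · have hsum : ∑ t ∈ Finset.Icc 1 (n + 1), 2 * |c t| ^ p * ∫ ω, ‖ζ t ω‖ ^ p ∂μ
          = (∑ t ∈ Finset.Icc 1 n, 2 * |c t| ^ p * ∫ ω, ‖ζ t ω‖ ^ p ∂μ)
            + 2 * |c (n + 1)| ^ p * ∫ ω, ‖ζ (n + 1) ω‖ ^ p ∂μ :=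
        Finset.sum_Icc_succ_top (by omega) _
      rw [hsum]
      rw [hnormZ] at hstep
      linarith [hstep, ihI]

end Main
/-- `p`-th moment bound for the exponentially weighted sum of a martingale
difference sequence with `p`-th bounded central moment:
`𝔼‖∑_{t=1}^k (1−β) β^{k−t} ζ_t‖^p ≤ 2 (1−β)^p σ^p / (1 − β^p)`. -/
theorem weighted_mds_pth_moment_bound {d : ℕ} {Ω : Type*} {mΩ : MeasurableSpace Ω}
    (μ : Measure Ω) [IsProbabilityMeasure μ]
    (𝓕 : Filtration ℕ mΩ)
    (p β σ : ℝ) (hp1 : 1 < p) (hp2 : p ≤ 2) (hβ0 : 0 ≤ β) (hβ1 : β < 1) (hσ : 0 ≤ σ)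
    (k : ℕ) (ζ : ℕ → Ω → EuclideanSpace ℝ (Fin d))
    (hadapt : ∀ t, StronglyMeasurable[𝓕 t] (ζ t))
    (hcond : ∀ t ∈ Finset.Icc 1 k, μ[ζ t | 𝓕 (t - 1)] =ᵐ[μ] 0)
    (hint : ∀ t ∈ Finset.Icc 1 k, Integrable (fun ω => ‖ζ t ω‖ ^ p) μ)
    (hmom : ∀ t ∈ Finset.Icc 1 k, ∫ ω, ‖ζ t ω‖ ^ p ∂μ ≤ σ ^ p) :
    ∫ ω, ‖∑ t ∈ Finset.Icc 1 k, ((1 - β) * β ^ (k - t)) • ζ t ω‖ ^ p ∂μ ≤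
      2 * (1 - β) ^ p * σ ^ p / (1 - β ^ p) := by
  have hp0 : (0 : ℝ) < p := lt_trans one_pos hp1
  have hP0 : ENNReal.ofReal p ≠ 0 := (ENNReal.ofReal_pos.mpr hp0).ne'
  have hPtop : ENNReal.ofReal p ≠ ∞ := ENNReal.ofReal_ne_top
  have hPr : (ENNReal.ofReal p).toReal = p := ENNReal.toReal_ofReal hp0.le
  -- ζ t ∈ L^p
  have hζp : ∀ t ∈ Finset.Icc 1 k, MemLp (ζ t) (ENNReal.ofReal p) μ := by
    intro t ht
    have ha : AEStronglyMeasurable (ζ t) μ := ((hadapt t).mono (𝓕.le t)).aestronglyMeasurable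
    refine (memLp_norm_rpow_iff (q := ENNReal.ofReal p) ha hP0 hPtop).mp ?_
    rw [hPr, ENNReal.div_self hP0 hPtop]
    exact memLp_one_iff_integrable.mpr (hint t ht)
  obtain ⟨-, hbound⟩ := sum_bound 𝓕 hp1 hp2 ζ (fun t => (1 - β) * β ^ (k - t)) hadapt k hcond hζp
  set r : ℝ := β ^ p with hr_def
  have hr0 : 0 ≤ r := Real.rpow_nonneg hβ0 p
  have hr1 : r < 1 := Real.rpow_lt_one hβ0 hβ1 hp0
  have h1β : (0 : ℝ) < 1 - β := by linarith
  -- each coefficient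
  have hcoef : ∀ t : ℕ, |(1 - β) * β ^ (k - t)| ^ p = (1 - β) ^ p * r ^ (k - t) := by
    intro t
    rw [abs_of_nonneg (by positivity), Real.mul_rpow h1β.le (by positivity)]
    congr 1
    rw [← Real.rpow_natCast β (k - t), ← Real.rpow_natCast (β ^ p) (k - t),
      ← Real.rpow_mul hβ0, ← Real.rpow_mul hβ0]
    congr 1
    ring
  have hσp : (0 : ℝ) ≤ σ ^ p := Real.rpow_nonneg hσ p
  have h1βp : (0 : ℝ) ≤ (1 - β) ^ p := Real.rpow_nonneg h1β.le p
  -- bound each integral by σ^p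
  have hstep2 : ∑ t ∈ Finset.Icc 1 k, 2 * |(1 - β) * β ^ (k - t)| ^ p * ∫ ω, ‖ζ t ω‖ ^ p ∂μ
      ≤ ∑ t ∈ Finset.Icc 1 k, 2 * (1 - β) ^ p * σ ^ p * r ^ (k - t) := by
    refine Finset.sum_le_sum fun t ht => ?_
    rw [hcoef t]
    have h := hmom t ht
    have hnn : (0:ℝ) ≤ 2 * ((1 - β) ^ p * r ^ (k - t)) := by positivity
    calc 2 * ((1 - β) ^ p * r ^ (k - t)) * ∫ ω, ‖ζ t ω‖ ^ p ∂μ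
        ≤ 2 * ((1 - β) ^ p * r ^ (k - t)) * σ ^ p := mul_le_mul_of_nonneg_left h hnn
      _ = 2 * (1 - β) ^ p * σ ^ p * r ^ (k - t) := by ring
  -- reindex and geometric series
  have hre : ∑ t ∈ Finset.Icc 1 k, r ^ (k - t) = ∑ j ∈ Finset.range k, r ^ j := by
    refine Finset.sum_nbij' (fun t => k - t) (fun j => k - j) ?_ ?_ ?_ ?_ ?_ <;>
      intro a ha <;> simp only [Finset.mem_Icc, Finset.mem_range] at * <;> omega
  have hgeom : ∑ j ∈ Finset.range k, r ^ j ≤ (1 - r)⁻¹ := by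
    rw [geom_sum_eq hr1.ne k, inv_eq_one_div,
      show (r ^ k - 1) / (r - 1) = (1 - r ^ k) / (1 - r) by
        rw [← neg_div_neg_eq]; ring_nf]
    have hnum : (1 : ℝ) - r ^ k ≤ 1 := by
      have := pow_nonneg hr0 k
      linarith
    gcongr
  have hfac : (0 : ℝ) ≤ 2 * (1 - β) ^ p * σ ^ p := by positivity
  calc ∫ ω, ‖∑ t ∈ Finset.Icc 1 k, ((1 - β) * β ^ (k - t)) • ζ t ω‖ ^ p ∂μ
      ≤ ∑ t ∈ Finset.Icc 1 k, 2 * |(1 - β) * β ^ (k - t)| ^ p * ∫ ω, ‖ζ t ω‖ ^ p ∂μ := hbound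
    _ ≤ ∑ t ∈ Finset.Icc 1 k, 2 * (1 - β) ^ p * σ ^ p * r ^ (k - t) := hstep2
    _ = 2 * (1 - β) ^ p * σ ^ p * ∑ t ∈ Finset.Icc 1 k, r ^ (k - t) := by
        rw [Finset.mul_sum]
    _ ≤ 2 * (1 - β) ^ p * σ ^ p * (1 - r)⁻¹ := by
        refine mul_le_mul_of_nonneg_left ?_ hfac
        rw [hre]
        exact hgeom
    _ = 2 * (1 - β) ^ p * σ ^ p / (1 - β ^ p) := by
        rw [div_eq_mul_inv]
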